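/- Let X be a compact metric space, μ a finite Borel measure on X, and (ρ_θ)_{θ ∈ ℝ} a continuous measure-preserving circle action on X. For m ∈ ℤ set V_m := {v ∈ L²(μ) : for every θ, v ∘ ρ_θ = e^{imθ}·v in L²(μ)}. Then the closed linear span of the union ⋃_{m ∈ ℤ} V_m is all of L²(μ); that is, L²(μ) decomposes as the Hilbert space orthogonal direct sum of the subspaces V_m, m ∈ ℤ. -/

import Mathlib

open MeasureTheory


set_option linter.unusedSectionVars false

section
variable {X : Type*} [MetricSpace X] [CompactSpace X] [MeasurableSpace X] [BorelSpace X]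
  {μ : Measure X} [IsFiniteMeasure μ]

theorem comp_congr' {f g : X → X} (hf : MeasurePreserving f μ μ) (hg : MeasurePreserving g μ μ)
    (h : f = g) :
    (Lp.compMeasurePreserving (E := ℂ) (p := 2) f hf) = Lp.compMeasurePreserving g hg := by
  subst h; rfl

theorem comp_smul' {f : X → X} (hf : MeasurePreserving f μ μ) (c : ℂ) (u : Lp ℂ 2 μ) :
    Lp.compMeasurePreserving f hf (c • u) = c • Lp.compMeasurePreserving f hf u := by
  apply Lp.ext
  have h3 : ((c • u : Lp ℂ 2 μ) : X → ℂ) ∘ f =ᵐ[μ] (c • (u : X → ℂ)) ∘ f :=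
    hf.quasiMeasurePreserving.ae_eq_comp (Lp.coeFn_smul c u)
  filter_upwards [Lp.coeFn_compMeasurePreserving (c • u) hf,
    Lp.coeFn_smul c (Lp.compMeasurePreserving f hf u), h3,
    Lp.coeFn_compMeasurePreserving u hf] with x e1 e2 e3 e4
  rw [e1, e2, e3]
  simp only [Function.comp_apply, Pi.smul_apply, e4]

/-- The Koopman operator as a continuous linear map. -/
noncomputable def Koop {f : X → X} (hf : MeasurePreserving f μ μ) :
    Lp ℂ 2 μ →L[ℂ] Lp ℂ 2 μ :=
  LinearMap.mkContinuous
    { toFun := Lp.compMeasurePreserving f hf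
      map_add' := map_add _
      map_smul' := fun c u => comp_smul' hf c u } 1
    (fun u => by simp)

@[simp] theorem Koop_apply {f : X → X} (hf : MeasurePreserving f μ μ) (u : Lp ℂ 2 μ) :
    Koop hf u = Lp.compMeasurePreserving f hf u := rfl

@[simp] theorem norm_Koop {f : X → X} (hf : MeasurePreserving f μ μ) (u : Lp ℂ 2 μ) :
    ‖Koop hf u‖ = ‖u‖ := Lp.norm_compMeasurePreserving u hf
end

section
variable {X : Type*} [MetricSpace X] [CompactSpace X] [MeasurableSpace X] [BorelSpace X]
  {μ : Measure X} [IsFiniteMeasure μ]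

theorem Koop_comp {f g : X → X} (hf : MeasurePreserving f μ μ) (hg : MeasurePreserving g μ μ)
    (u : Lp ℂ 2 μ) : Koop hg (Koop hf u) = Koop (hf.comp hg) u := by
  apply Lp.ext
  have h1 : ((Koop hf u : Lp ℂ 2 μ) : X → ℂ) ∘ g =ᵐ[μ] ((u : X → ℂ) ∘ f) ∘ g :=
    hg.quasiMeasurePreserving.ae_eq_comp (Lp.coeFn_compMeasurePreserving u hf)
  filter_upwards [Lp.coeFn_compMeasurePreserving (Koop hf u) hg, h1,
    Lp.coeFn_compMeasurePreserving u (hf.comp hg)] with x e1 e2 e3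
  simp only [Koop_apply] at *
  rw [e1, e2, e3]; rfl

theorem inner_Koop {f : X → X} (hf : MeasurePreserving f μ μ) (u v : Lp ℂ 2 μ) :
    (inner ℂ (Koop hf u) (Koop hf v) : ℂ) = inner ℂ u v := by
  rw [L2.inner_def, L2.inner_def]
  have hm : AEStronglyMeasurable (fun x => (inner ℂ (u x) (v x) : ℂ)) μ :=
    ((Lp.aestronglyMeasurable u).inner (Lp.aestronglyMeasurable v))
  have h2 : ∫ x, (inner ℂ ((Koop hf u) x) ((Koop hf v) x) : ℂ) ∂μ
      = ∫ x, (inner ℂ (u (f x)) (v (f x)) : ℂ) ∂μ := by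
    apply integral_congr_ae
    filter_upwards [Lp.coeFn_compMeasurePreserving u hf,
      Lp.coeFn_compMeasurePreserving v hf] with x e1 e2
    simp only [Koop_apply] at *
    rw [e1, e2]; rfl
  rw [h2]
  have : ∫ x, (inner ℂ (u (f x)) (v (f x)) : ℂ) ∂μ
      = ∫ y, (inner ℂ (u y) (v y) : ℂ) ∂(Measure.map f μ) := by
    rw [integral_map hf.aemeasurable]
    rw [hf.map_eq]; exact hm
  rw [this, hf.map_eq]

theorem dist_Koop {f : X → X} (hf : MeasurePreserving f μ μ) (u v : Lp ℂ 2 μ) :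
    dist (Koop hf u) (Koop hf v) = dist u v := by
  rw [dist_eq_norm, ← map_sub, norm_Koop, ← dist_eq_norm]

theorem Koop_continuous (ρ : ℝ → X → X) (hρ : ∀ θ : ℝ, MeasurePreserving (ρ θ) μ μ)
    (hcont : Continuous fun p : ℝ × X => ρ p.1 p.2) (f : Lp ℂ 2 μ) :
    Continuous fun θ => Koop (hρ θ) f := by
  set T := (ContinuousMap.toLp (E := ℂ) 2 μ ℂ) with hT
  have key : ∀ g : C(X, ℂ), Continuous fun θ => Koop (hρ θ) (T g) := by
    intro g
    have hF : Continuous fun p : ℝ × X => g (ρ p.1 p.2) := g.continuous.comp hcont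
    have heq : ∀ θ, Koop (hρ θ) (T g) = T ((ContinuousMap.curry ⟨_, hF⟩) θ) := by
      intro θ
      apply Lp.ext
      have h1 : ((T g : Lp ℂ 2 μ) : X → ℂ) ∘ ρ θ =ᵐ[μ] (g : X → ℂ) ∘ ρ θ :=
        (hρ θ).quasiMeasurePreserving.ae_eq_comp (ContinuousMap.coeFn_toLp (p := 2) (μ := μ) (𝕜 := ℂ) g)
      filter_upwards [Lp.coeFn_compMeasurePreserving (T g) (hρ θ), h1,
        ContinuousMap.coeFn_toLp (p := 2) (μ := μ) (𝕜 := ℂ) ((ContinuousMap.curry ⟨_, hF⟩) θ)] with x e1 e2 e3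
      simp only [Koop_apply] at *
      rw [e1, e2, e3]; rfl
    simp only [heq]
    exact T.continuous.comp (ContinuousMap.curry ⟨_, hF⟩).continuous
  refine Metric.continuous_iff.2 fun θ₀ ε hε => ?_
  obtain ⟨g, hg⟩ := (ContinuousMap.toLp_denseRange (𝕜 := ℂ) (E := ℂ) (μ := μ) (p := 2)
    (by norm_num : (2:ENNReal) ≠ ⊤)).exists_dist_lt f (by positivity : (0:ℝ) < ε/3)
  obtain ⟨δ, hδ, hδ'⟩ := Metric.continuous_iff.1 (key g) θ₀ (ε/3) (by positivity)
  refine ⟨δ, hδ, fun θ hθ => ?_⟩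
  have b1 : dist (Koop (hρ θ) f) (Koop (hρ θ) (T g)) = dist f (T g) := dist_Koop _ _ _
  have b3 : dist (Koop (hρ θ₀) (T g)) (Koop (hρ θ₀) f) = dist (T g) f := dist_Koop _ _ _
  calc dist (Koop (hρ θ) f) (Koop (hρ θ₀) f)
      ≤ dist (Koop (hρ θ) f) (Koop (hρ θ) (T g)) + dist (Koop (hρ θ) (T g)) (Koop (hρ θ₀) (T g))
        + dist (Koop (hρ θ₀) (T g)) (Koop (hρ θ₀) f) := dist_triangle4 _ _ _ _
    _ < ε/3 + ε/3 + ε/3 := by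
        rw [b1, b3, dist_comm (T g) f]
        exact add_lt_add (add_lt_add hg (hδ' θ hθ)) hg
    _ = ε := by ring
end

section
variable {X : Type*} [MetricSpace X] [CompactSpace X] [MeasurableSpace X] [BorelSpace X]
  {μ : Measure X} [IsFiniteMeasure μ]

theorem Koop_congr {f g : X → X} (hf : MeasurePreserving f μ μ) (hg : MeasurePreserving g μ μ)
    (h : f = g) : (Koop hf : Lp ℂ 2 μ →L[ℂ] Lp ℂ 2 μ) = Koop hg := by subst h; rfl

theorem Koop_id {f : X → X} (hf : MeasurePreserving f μ μ) (h : f = id) (u : Lp ℂ 2 μ) :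
    Koop hf u = u := by
  subst h
  apply Lp.ext
  filter_upwards [Lp.coeFn_compMeasurePreserving u hf] with x e
  simpa using e
end


set_option maxHeartbeats 2000000 in
/-- For a continuous measure-preserving circle action on a compact
metric space with a finite Borel measure, `L²(μ)` is the Hilbert space orthogonal direct
sum of the Fourier components `V_m`, `m ∈ ℤ`: the `V_m` are pairwise orthogonal and the
closed linear span of their union is all of `L²(μ)`. -/
theorem fourier_decomposition_of_L2
    {X : Type*} [MetricSpace X] [CompactSpace X]
    [MeasurableSpace X] [BorelSpace X]
    (μ : Measure X) [IsFiniteMeasure μ]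
    (ρ : ℝ → X → X)
    (hcont : Continuous fun p : ℝ × X => ρ p.1 p.2)
    (hρ : ∀ θ : ℝ, MeasurePreserving (ρ θ) μ μ)
    (hadd : ∀ θ θ' : ℝ, ρ (θ + θ') = ρ θ ∘ ρ θ')
    (h0 : ρ 0 = id)
    (hper : ∀ θ : ℝ, ρ (θ + 2 * Real.pi) = ρ θ)
    (V : ℤ → Set (Lp ℂ 2 μ))
    (hV : ∀ m : ℤ, V m = {u : Lp ℂ 2 μ | ∀ θ : ℝ,
      Lp.compMeasurePreserving (ρ θ) (hρ θ) u
        = Complex.exp ((m : ℂ) * (θ : ℂ) * Complex.I) • u}) :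
    (∀ m m' : ℤ, m ≠ m' → ∀ u ∈ V m, ∀ v ∈ V m', @inner ℂ _ _ u v = 0) ∧
      (Submodule.span ℂ (⋃ m : ℤ, V m)).topologicalClosure = ⊤ := by
  constructor
  · -- orthogonality
    intro m m' hmm' u hu v hv
    rw [hV m] at hu; rw [hV m'] at hv
    have hneR : ((m' : ℝ)) - m ≠ 0 := sub_ne_zero.2 (by exact_mod_cast hmm'.symm)
    have hneC : ((m' : ℂ)) - m ≠ 0 := sub_ne_zero.2 (by exact_mod_cast hmm'.symm)
    set θ : ℝ := Real.pi / ((m' : ℝ) - m) with hθ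
    have h1 : (inner ℂ u v : ℂ) = inner ℂ (Koop (hρ θ) u) (Koop (hρ θ) v) := (inner_Koop _ u v).symm
    rw [Koop_apply, Koop_apply, hu θ, hv θ, inner_smul_left, inner_smul_right,
      ← mul_assoc] at h1
    have hexp : (starRingEnd ℂ) (Complex.exp ((m:ℂ) * θ * Complex.I)) *
        Complex.exp ((m':ℂ) * θ * Complex.I) = -1 := by
      rw [← Complex.exp_conj, map_mul, map_mul, Complex.conj_I, Complex.conj_ofReal,
        ← Complex.exp_add]
      have harg : (starRingEnd ℂ) ((m:ℂ)) * θ * (-Complex.I) + (m':ℂ) * θ * Complex.I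
          = Real.pi * Complex.I := by
        rw [map_intCast]
        have : ((m':ℂ) - m) * (θ:ℂ) = (Real.pi : ℂ) := by
          rw [hθ]
          push_cast
          field_simp
        linear_combination Complex.I * this
      rw [harg]
      exact Complex.exp_pi_mul_I
    rw [hexp] at h1
    linear_combination (1/2 : ℂ) * h1
  · -- density
    haveI hfact : Fact (0 < 2 * Real.pi) := ⟨by positivity⟩
    set S := (Submodule.span ℂ (⋃ m : ℤ, V m)).topologicalClosure with hSdef
    rw [eq_top_iff]
    rintro f -
    have hUc : ∀ g : Lp ℂ 2 μ, Continuous fun θ => Koop (hρ θ) g :=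
      fun g => Koop_continuous ρ hρ hcont g
    set conv : C(AddCircle (2 * Real.pi), ℂ) → Lp ℂ 2 μ :=
      fun φ => ∫ θ in (-Real.pi)..Real.pi,
        φ (θ : AddCircle (2 * Real.pi)) • Koop (hρ θ) f with hconv
    have hGc : ∀ φ : C(AddCircle (2 * Real.pi), ℂ),
        Continuous fun θ : ℝ => φ (θ : AddCircle (2 * Real.pi)) • Koop (hρ θ) f :=
      fun φ => ((φ.continuous.comp (AddCircle.continuous_mk' _)).smul (hUc f))
    have hGi : ∀ (φ : C(AddCircle (2 * Real.pi), ℂ)) (a b : ℝ),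
        IntervalIntegrable (fun θ : ℝ => φ (θ : AddCircle (2 * Real.pi)) • Koop (hρ θ) f)
          MeasureTheory.volume a b :=
      fun φ a b => (hGc φ).intervalIntegrable a b
    have hKper : ∀ (θ : ℝ) (u : Lp ℂ 2 μ), Koop (hρ (θ + 2 * Real.pi)) u = Koop (hρ θ) u :=
      fun θ u => by rw [Koop_congr (hρ (θ + 2 * Real.pi)) (hρ θ) (hper θ)]
    have hKadd : ∀ (θ θ' : ℝ) (u : Lp ℂ 2 μ),
        Koop (hρ θ') (Koop (hρ θ) u) = Koop (hρ (θ + θ')) u :=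
      fun θ θ' u => (Koop_comp _ _ u).trans
        (by rw [Koop_congr ((hρ θ).comp (hρ θ')) (hρ (θ + θ')) (hadd θ θ').symm])
    have hshift : ∀ (φ : C(AddCircle (2 * Real.pi), ℂ)) (θ' : ℝ),
        Koop (hρ θ') (conv φ) = ∫ θ in (-Real.pi)..Real.pi,
          φ ((θ - θ' : ℝ) : AddCircle (2 * Real.pi)) • Koop (hρ θ) f := by
      intro φ θ'
      rw [hconv]
      rw [← ContinuousLinearMap.intervalIntegral_comp_comm _ (hGi φ _ _)]
      have e1 : ∀ θ : ℝ, Koop (hρ θ') (φ (θ : AddCircle (2 * Real.pi)) • Koop (hρ θ) f)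
          = (fun s : ℝ => φ ((s - θ' : ℝ) : AddCircle (2 * Real.pi)) • Koop (hρ s) f)
            (θ + θ') := by
        intro θ
        show Koop (hρ θ') (φ (θ : AddCircle (2 * Real.pi)) • Koop (hρ θ) f)
            = φ ((θ + θ' - θ' : ℝ) : AddCircle (2 * Real.pi)) • Koop (hρ (θ + θ')) f
        rw [ContinuousLinearMap.map_smul, hKadd, add_sub_cancel_right]
      have e1' : (∫ θ in (-Real.pi)..Real.pi,
            Koop (hρ θ') (φ (θ : AddCircle (2 * Real.pi)) • Koop (hρ θ) f))
          = ∫ θ in (-Real.pi)..Real.pi,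
            (fun s : ℝ => φ ((s - θ' : ℝ) : AddCircle (2 * Real.pi)) • Koop (hρ s) f)
              (θ + θ') :=
        intervalIntegral.integral_congr (fun θ _ => e1 θ)
      rw [e1', intervalIntegral.integral_comp_add_right
        (fun s : ℝ => φ ((s - θ' : ℝ) : AddCircle (2 * Real.pi)) • Koop (hρ s) f)]
      have hperG : Function.Periodic
          (fun s : ℝ => φ ((s - θ' : ℝ) : AddCircle (2 * Real.pi)) • Koop (hρ s) f)
          (2 * Real.pi) := by
        intro s
        simp only
        rw [hKper]
        have h3 : (s + 2 * Real.pi - θ' : ℝ) = (s - θ') + 2 * Real.pi := by ring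
        rw [h3, AddCircle.coe_add_period]
      have h2 := hperG.intervalIntegral_add_eq (-Real.pi + θ') (-Real.pi)
      have ha : -Real.pi + θ' + 2 * Real.pi = Real.pi + θ' := by ring
      have hb : -Real.pi + 2 * Real.pi = Real.pi := by ring
      rw [ha, hb] at h2
      exact h2
    have hfour : ∀ m : ℤ, conv (fourier m) ∈ V (-m) := by
      intro m
      rw [hV]
      intro θ'
      have hKo : Lp.compMeasurePreserving (ρ θ') (hρ θ') (conv (fourier m))
          = Koop (hρ θ') (conv (fourier m)) := rfl
      rw [hKo, hshift]
      have hπ : (Real.pi : ℂ) ≠ 0 := by exact_mod_cast Real.pi_ne_zero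
      have e2 : ∀ θ : ℝ, (fourier m) ((θ - θ' : ℝ) : AddCircle (2 * Real.pi)) • Koop (hρ θ) f
          = Complex.exp (((-m : ℤ) : ℂ) * (θ' : ℂ) * Complex.I) •
            ((fourier m) ((θ : ℝ) : AddCircle (2 * Real.pi)) • Koop (hρ θ) f) := by
        intro θ
        rw [smul_smul]
        congr 1
        rw [fourier_coe_apply, fourier_coe_apply, ← Complex.exp_add]
        congr 1
        push_cast
        field_simp
        ring
      rw [intervalIntegral.integral_congr (fun θ _ => e2 θ), intervalIntegral.integral_smul]
    have hfourS : ∀ m : ℤ, conv (fourier m) ∈ S := fun m =>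
      Submodule.le_topologicalClosure _ (Submodule.subset_span (Set.mem_iUnion.2 ⟨-m, hfour m⟩))
    have hconvcont : Continuous conv := by
      rw [Metric.continuous_iff]
      intro φ₀ ε hε
      refine ⟨ε / (2 * Real.pi * (‖f‖ + 1) + 1), div_pos hε (by positivity), fun φ hφ => ?_⟩
      rw [dist_eq_norm]
      have hsub : conv φ - conv φ₀ = ∫ θ in (-Real.pi)..Real.pi,
          ((φ - φ₀) (θ : AddCircle (2 * Real.pi))) • Koop (hρ θ) f := by
        rw [hconv, ← intervalIntegral.integral_sub (hGi φ _ _) (hGi φ₀ _ _)]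
        apply intervalIntegral.integral_congr
        intro θ _
        simp [sub_smul]
      rw [hsub]
      have hptw : ∀ θ ∈ Set.uIoc (-Real.pi) Real.pi,
          ‖((φ - φ₀) (θ : AddCircle (2 * Real.pi))) • Koop (hρ θ) f‖ ≤ ‖φ - φ₀‖ * ‖f‖ := by
        intro θ _
        rw [norm_smul, norm_Koop]
        exact mul_le_mul_of_nonneg_right ((φ - φ₀).norm_coe_le_norm _) (norm_nonneg f)
      have hb := intervalIntegral.norm_integral_le_of_norm_le_const hptw
      have habs : |Real.pi - -Real.pi| = 2 * Real.pi := by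
        have hx : Real.pi - -Real.pi = 2 * Real.pi := by ring
        rw [hx, abs_of_pos (by positivity)]
      rw [habs] at hb
      have hφ' : ‖φ - φ₀‖ < ε / (2 * Real.pi * (‖f‖ + 1) + 1) := by
        rw [← dist_eq_norm]; exact hφ
      have h2π : (0:ℝ) < 2 * Real.pi := by positivity
      calc ‖∫ θ in (-Real.pi)..Real.pi,
            ((φ - φ₀) (θ : AddCircle (2 * Real.pi))) • Koop (hρ θ) f‖
          ≤ ‖φ - φ₀‖ * ‖f‖ * (2 * Real.pi) := hb
        _ < ε := by
            have h1 : ‖φ - φ₀‖ * ‖f‖ * (2 * Real.pi)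
                ≤ ‖φ - φ₀‖ * (2 * Real.pi * (‖f‖ + 1) + 1) := by
              nlinarith [norm_nonneg (φ - φ₀), norm_nonneg f]
            have h2 : ‖φ - φ₀‖ * (2 * Real.pi * (‖f‖ + 1) + 1) < ε := by
              rw [lt_div_iff₀ (by positivity)] at hφ'
              linarith
            linarith
    have hWmem : ∀ φ : C(AddCircle (2 * Real.pi), ℂ), conv φ ∈ S := by
      set W : Submodule ℂ C(AddCircle (2 * Real.pi), ℂ) :=
        { carrier := conv ⁻¹' S
          add_mem' := by
            intro a b ha hb
            have ha' : conv a ∈ S := ha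
            have hb' : conv b ∈ S := hb
            show conv (a + b) ∈ S
            have hab : conv (a + b) = conv a + conv b := by
              rw [hconv, ← intervalIntegral.integral_add (hGi a _ _) (hGi b _ _)]
              apply intervalIntegral.integral_congr
              intro θ _
              simp [add_smul]
            rw [hab]
            exact S.add_mem ha' hb'
          zero_mem' := by
            show conv 0 ∈ S
            have h00 : conv 0 = 0 := by
              rw [hconv]
              simp
            rw [h00]
            exact S.zero_mem
          smul_mem' := by
            intro c a ha
            have ha' : conv a ∈ S := ha
            show conv (c • a) ∈ S
            have hca : conv (c • a) = c • conv a := by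
              rw [hconv, ← intervalIntegral.integral_smul]
              apply intervalIntegral.integral_congr
              intro θ _
              simp [smul_smul]
            rw [hca]
            exact S.smul_mem c ha' } with hW
      have hle : Submodule.span ℂ (Set.range (fourier (T := 2 * Real.pi))) ≤ W :=
        Submodule.span_le.2 (by rintro _ ⟨m, rfl⟩; exact hfourS m)
      have hclosed : IsClosed (W : Set C(AddCircle (2 * Real.pi), ℂ)) :=
        (Submodule.isClosed_topologicalClosure _).preimage hconvcont
      have htop : (⊤ : Submodule ℂ C(AddCircle (2 * Real.pi), ℂ)) ≤ W := by
        rw [← span_fourier_closure_eq_top]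
        exact Submodule.topologicalClosure_minimal _ hle hclosed
      intro φ
      exact htop Submodule.mem_top
    have hKzero : Koop (hρ 0) f = f := Koop_id (hρ 0) h0 f
    have hScl : IsClosed (S : Set (Lp ℂ 2 μ)) := Submodule.isClosed_topologicalClosure _
    have hmemcl : f ∈ closure (S : Set (Lp ℂ 2 μ)) := by
      rw [Metric.mem_closure_iff]
      intro ε hε
      obtain ⟨δ₀, hδ₀, hδ⟩ := Metric.continuous_iff.1 (hUc f) 0 (ε / 2) (by positivity)
      set δ : ℝ := min δ₀ Real.pi with hδdef
      have hδpos : 0 < δ := lt_min hδ₀ Real.pi_pos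
      set b : ℝ → ℝ := fun θ => max 0 (1 - |θ| / δ) with hbdef
      have hbc : Continuous b :=
        continuous_const.max (continuous_const.sub (continuous_abs.div_const δ))
      have hbnn : ∀ θ, 0 ≤ b θ := fun θ => le_max_left _ _
      set φ : C(AddCircle (2 * Real.pi), ℂ) :=
        ⟨fun z => ((max 0 (1 - ‖z‖ / δ) : ℝ) : ℂ),
          Complex.continuous_ofReal.comp
            (continuous_const.max (continuous_const.sub (continuous_norm.div_const δ)))⟩
        with hφdef
      have hφθ : ∀ θ ∈ Set.uIcc (-Real.pi) Real.pi,
          φ (θ : AddCircle (2 * Real.pi)) = ((b θ : ℝ) : ℂ) := by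
        intro θ hθ
        have h1 : |θ| ≤ |2 * Real.pi| / 2 := by
          rw [Set.uIcc_of_le (by linarith [Real.pi_pos] : -Real.pi ≤ Real.pi)] at hθ
          rw [abs_of_pos (by positivity : (0:ℝ) < 2 * Real.pi)]
          rw [abs_le]
          exact ⟨by linarith [hθ.1], by linarith [hθ.2]⟩
        have h2 : ‖(θ : AddCircle (2 * Real.pi))‖ = |θ| :=
          (AddCircle.norm_coe_eq_abs_iff (p := 2 * Real.pi) (by positivity)).2 h1
        show (((max 0 (1 - ‖(θ : AddCircle (2 * Real.pi))‖ / δ) : ℝ)) : ℂ) = _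
        rw [h2]
      set c : ℝ := ∫ θ in (-Real.pi)..Real.pi, b θ with hcdef
      have hbi : ∀ a b' : ℝ, IntervalIntegrable b MeasureTheory.volume a b' :=
        fun a b' => hbc.intervalIntegrable a b'
      have hcpos : 0 < c := by
        have hd : δ / 2 ≤ Real.pi :=
          le_trans (by linarith : δ / 2 ≤ δ) (min_le_right _ _)
        have hsplit1 : (∫ θ in (-Real.pi)..(-(δ/2)), b θ)
            + (∫ θ in (-(δ/2))..Real.pi, b θ) = c :=
          intervalIntegral.integral_add_adjacent_intervals (hbi _ _) (hbi _ _)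
        have hsplit2 : (∫ θ in (-(δ/2))..(δ/2), b θ) + (∫ θ in (δ/2)..Real.pi, b θ)
            = ∫ θ in (-(δ/2))..Real.pi, b θ :=
          intervalIntegral.integral_add_adjacent_intervals (hbi _ _) (hbi _ _)
        have hn1 : 0 ≤ ∫ θ in (-Real.pi)..(-(δ/2)), b θ :=
          intervalIntegral.integral_nonneg (by linarith) (fun x _ => hbnn x)
        have hn2 : 0 ≤ ∫ θ in (δ/2)..Real.pi, b θ :=
          intervalIntegral.integral_nonneg (by linarith) (fun x _ => hbnn x)
        have hlow : (∫ θ in (-(δ/2))..(δ/2), (1/2 : ℝ)) ≤ ∫ θ in (-(δ/2))..(δ/2), b θ := by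
          apply intervalIntegral.integral_mono_on (by linarith) intervalIntegrable_const
            (hbi _ _)
          intro x hx
          have hxabs : |x| ≤ δ / 2 := abs_le.2 ⟨hx.1, hx.2⟩
          have hdiv : |x| / δ ≤ 1/2 := by
            rw [div_le_iff₀ hδpos]
            linarith
          calc (1/2 : ℝ) ≤ 1 - |x| / δ := by linarith
            _ ≤ b x := le_max_right _ _
        have hconst : (∫ θ in (-(δ/2))..(δ/2), (1/2 : ℝ)) = δ / 2 := by
          rw [intervalIntegral.integral_const, smul_eq_mul]
          ring
        linarith
      have hφS : conv φ ∈ S := hWmem φ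
      refine ⟨((c⁻¹ : ℝ) : ℂ) • conv φ, S.smul_mem _ hφS, ?_⟩
      have hconvφ : conv φ = ∫ θ in (-Real.pi)..Real.pi, ((b θ : ℝ) : ℂ) • Koop (hρ θ) f := by
        rw [hconv]
        exact intervalIntegral.integral_congr (fun θ hθ => by rw [hφθ θ hθ])
      have hbC : ∀ a b' : ℝ, IntervalIntegrable
          (fun θ : ℝ => ((b θ : ℝ) : ℂ) • Koop (hρ θ) f) MeasureTheory.volume a b' :=
        fun a b' => ((Complex.continuous_ofReal.comp hbc).smul (hUc f)).intervalIntegrable a b'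
      have hfc : ∀ a b' : ℝ, IntervalIntegrable
          (fun θ : ℝ => ((b θ : ℝ) : ℂ) • f) MeasureTheory.volume a b' :=
        fun a b' =>
          ((Complex.continuous_ofReal.comp hbc).smul continuous_const).intervalIntegrable a b'
      have hcf : ((c : ℝ) : ℂ) • f = ∫ θ in (-Real.pi)..Real.pi, ((b θ : ℝ) : ℂ) • f := by
        rw [intervalIntegral.integral_smul_const, intervalIntegral.integral_ofReal]
      have hdiff : conv φ - ((c : ℝ) : ℂ) • f
          = ∫ θ in (-Real.pi)..Real.pi, ((b θ : ℝ) : ℂ) • (Koop (hρ θ) f - f) := by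
        rw [hconvφ, hcf, ← intervalIntegral.integral_sub (hbC _ _) (hfc _ _)]
        exact intervalIntegral.integral_congr (fun θ _ => by rw [smul_sub])
      have hnorm : ‖conv φ - ((c : ℝ) : ℂ) • f‖ ≤ c * (ε / 2) := by
        rw [hdiff]
        have h1 : ‖∫ θ in (-Real.pi)..Real.pi, ((b θ : ℝ) : ℂ) • (Koop (hρ θ) f - f)‖
            ≤ ∫ θ in (-Real.pi)..Real.pi, ‖((b θ : ℝ) : ℂ) • (Koop (hρ θ) f - f)‖ :=
          intervalIntegral.norm_integral_le_integral_norm (by linarith [Real.pi_pos])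
        have h2 : (∫ θ in (-Real.pi)..Real.pi, ‖((b θ : ℝ) : ℂ) • (Koop (hρ θ) f - f)‖)
            ≤ ∫ θ in (-Real.pi)..Real.pi, b θ * (ε / 2) := by
          apply intervalIntegral.integral_mono_on (by linarith [Real.pi_pos])
          · exact (continuous_norm.comp ((Complex.continuous_ofReal.comp hbc).smul
              ((hUc f).sub continuous_const))).intervalIntegrable _ _
          · exact (hbc.mul continuous_const).intervalIntegrable _ _
          · intro x _
            show ‖((b x : ℝ) : ℂ) • (Koop (hρ x) f - f)‖ ≤ b x * (ε / 2)
            rw [norm_smul, Complex.norm_real, Real.norm_eq_abs, _root_.abs_of_nonneg (hbnn x)]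
            by_cases hbx : b x = 0
            · simp [hbx]
            · have hxl : |x| < δ := by
                by_contra hcon
                push_neg at hcon
                have hge : 1 ≤ |x| / δ := (one_le_div hδpos).2 hcon
                exact hbx (max_eq_left (by linarith))
              have hdist : dist x 0 < δ₀ := by
                rw [Real.dist_eq, sub_zero]
                exact lt_of_lt_of_le hxl (min_le_left _ _)
              have hlt := hδ x hdist
              rw [dist_eq_norm, hKzero] at hlt
              exact mul_le_mul_of_nonneg_left (le_of_lt hlt) (hbnn x)
        have h3 : (∫ θ in (-Real.pi)..Real.pi, b θ * (ε / 2)) = c * (ε / 2) :=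
          intervalIntegral.integral_mul_const _ _
        linarith
      rw [dist_eq_norm]
      have hcne : ((c : ℝ) : ℂ) ≠ 0 := by exact_mod_cast ne_of_gt hcpos
      have hfeq : f = ((c⁻¹ : ℝ) : ℂ) • (((c : ℝ) : ℂ) • f) := by
        rw [smul_smul, ← Complex.ofReal_mul, inv_mul_cancel₀ (ne_of_gt hcpos)]
        simp
      calc ‖f - ((c⁻¹ : ℝ) : ℂ) • conv φ‖
          = ‖((c⁻¹ : ℝ) : ℂ) • (((c : ℝ) : ℂ) • f - conv φ)‖ := by
            rw [smul_sub, ← hfeq]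
        _ = ‖((c⁻¹ : ℝ) : ℂ)‖ * ‖((c : ℝ) : ℂ) • f - conv φ‖ := norm_smul _ _
        _ ≤ c⁻¹ * (c * (ε / 2)) := by
            apply mul_le_mul (le_of_eq ?_) ?_ (norm_nonneg _) (by positivity)
            · rw [Complex.norm_real, Real.norm_eq_abs, _root_.abs_of_pos (by positivity)]
            · rw [norm_sub_rev]
              exact hnorm
        _ = ε / 2 := by
            field_simp
        _ < ε := by linarith
    rwa [hScl.closure_eq] at hmemcl
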